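/- Robustness to ambiguity aversion: Suppose there exist a pair of experiments σ = (σ̄, σ̲) and a non-degenerate μ ∈ Δ({1,2}) such that the binary ambiguous experiment (σ, μ) is obedient and U_s(σ, μ, τ*) > u_s^BP. Then: (i) (σ, μ) still satisfies Ũ_s(σ, μ, τ*) > u_s^BP for any sender with φ̃_s less concave than φ_s (i.e., φ_s = φ∘φ̃_s for some strictly increasing, concave, differentiable φ); (ii) for any receiver with φ̃_r = φ∘φ_r more concave than φ_r (φ strictly increasing, concave, differentiable), there exists μ̃ ∈ Δ({1,2}) such that (σ, μ̃) is obedient for the φ̃_r-receiver and gives the sender a payoff above u_s^BP; and (iii) if additionally σ̲ is obedient as a single experiment, then μ̃ in (ii) can be taken equal to μ. -/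

import Mathlib

open Finset

/-- A stochastic kernel from `X` to `Y`: each row `k x` is a probability vector on `Y`.
An experiment is a kernel from states `Ω` to messages; a receiver strategy is a kernel
from messages to actions `A`. -/
def IsKernel {X Y : Type*} [Fintype Y] (k : X → Y → ℝ) : Prop :=
  (∀ x y, 0 ≤ k x y) ∧ ∀ x, ∑ y, k x y = 1

/-- A probability vector on a finite type. -/
def IsProb {Θ : Type*} [Fintype Θ] (μ : Θ → ℝ) : Prop :=
  (∀ θ, 0 ≤ μ θ) ∧ ∑ θ, μ θ = 1

/-- The obedient strategy `τ*`: take the recommended action with probability one. -/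
noncomputable def tauStar {A : Type*} [DecidableEq A] : A → A → ℝ :=
  fun m a => if a = m then (1 : ℝ) else 0

/-- Expected payoff `u_i(σ, τ) = ∑_{ω,m,a} p(ω) σ(m|ω) τ(a|m) u_i(a,ω)`. -/
noncomputable def expPayoff {Ω M A : Type*} [Fintype Ω] [Fintype M] [Fintype A]
    (p : Ω → ℝ) (u : A → Ω → ℝ) (σ : Ω → M → ℝ) (τ : M → A → ℝ) : ℝ :=
  ∑ ω, ∑ m, ∑ a, p ω * σ ω m * τ m a * u a ω

/-- Obedience of a single (unambiguous) canonical experiment: `τ*` is a best reply. -/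
def Obedient {Ω A : Type*} [Fintype Ω] [Fintype A] [DecidableEq A]
    (p : Ω → ℝ) (ur : A → Ω → ℝ) (σ : Ω → A → ℝ) : Prop :=
  ∀ τ : A → A → ℝ, IsKernel τ → expPayoff p ur σ τ ≤ expPayoff p ur σ tauStar

/-- Obedience of an ambiguous experiment `(σ, μ)` for a smooth-ambiguity receiver with
index `φr`:  `τ*` maximizes `τ ↦ U_r(σ, μ, τ) = φr⁻¹(∑_θ μ_θ φr(u_r(σ_θ, τ)))`; since `φr`
is strictly increasing this is equivalent to `τ*` maximizing `τ ↦ ∑_θ μ_θ φr(u_r(σ_θ, τ))`. -/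
def AmbObedient {Ω A Θ : Type*} [Fintype Ω] [Fintype A] [DecidableEq A] [Fintype Θ]
    (φr : ℝ → ℝ) (p : Ω → ℝ) (ur : A → Ω → ℝ) (σ : Θ → Ω → A → ℝ) (μ : Θ → ℝ) : Prop :=
  ∀ τ : A → A → ℝ, IsKernel τ →
    ∑ θ, μ θ * φr (expPayoff p ur (σ θ) τ) ≤ ∑ θ, μ θ * φr (expPayoff p ur (σ θ) tauStar)

/-- A smooth ambiguity index: strictly increasing, concave, differentiable. -/
def SmoothIndex (φ : ℝ → ℝ) : Prop :=
  StrictMono φ ∧ ConcaveOn ℝ Set.univ φ ∧ Differentiable ℝ φ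

/-- Two experiments are (strictly) Pareto ranked: under obedience, sender and receiver
strictly rank them the same way. -/
def ParetoRanked {Ω A : Type*} [Fintype Ω] [Fintype A] [DecidableEq A]
    (p : Ω → ℝ) (us ur : A → Ω → ℝ) (σ σ' : Ω → A → ℝ) : Prop :=
  (expPayoff p us σ' tauStar < expPayoff p us σ tauStar ∧
      expPayoff p ur σ' tauStar < expPayoff p ur σ tauStar) ∨
  (expPayoff p us σ tauStar < expPayoff p us σ' tauStar ∧
      expPayoff p ur σ tauStar < expPayoff p ur σ' tauStar)

/-- Two experiments are weakly Pareto ranked. -/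
def WeaklyParetoRanked {Ω A : Type*} [Fintype Ω] [Fintype A] [DecidableEq A]
    (p : Ω → ℝ) (us ur : A → Ω → ℝ) (σ σ' : Ω → A → ℝ) : Prop :=
  (expPayoff p us σ' tauStar ≤ expPayoff p us σ tauStar ∧
      expPayoff p ur σ' tauStar ≤ expPayoff p ur σ tauStar) ∨
  (expPayoff p us σ tauStar ≤ expPayoff p us σ' tauStar ∧
      expPayoff p ur σ tauStar ≤ expPayoff p ur σ' tauStar)

/-- Pointwise convex combination of two experiments. -/
noncomputable def mixExp {Ω A : Type*} (lam : ℝ) (σ1 σ2 : Ω → A → ℝ) : Ω → A → ℝ :=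
  fun ω a => lam * σ1 ω a + (1 - lam) * σ2 ω a

/-- `(σbar, σlo, lam)` is a Pareto-ranked splitting of the experiment `σ`. -/
def ParetoRankedSplitting {Ω A : Type*} [Fintype Ω] [Fintype A] [DecidableEq A]
    (p : Ω → ℝ) (us ur : A → Ω → ℝ) (σbar σlo : Ω → A → ℝ) (lam : ℝ) (σ : Ω → A → ℝ) : Prop :=
  IsKernel σbar ∧ IsKernel σlo ∧ lam ∈ Set.Ioo (0 : ℝ) 1 ∧
    mixExp lam σbar σlo = σ ∧ ParetoRanked p us ur σbar σlo

/-- The `((σbar, σlo), lam)`-probability premium of a player with utility `u` and index `φ`. -/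
noncomputable def probPremium {Ω A : Type*} [Fintype Ω] [Fintype A] [DecidableEq A]
    (p : Ω → ℝ) (u : A → Ω → ℝ) (φ : ℝ → ℝ) (σbar σlo : Ω → A → ℝ) (lam : ℝ) : ℝ :=
  (φ (expPayoff p u (mixExp lam σbar σlo) tauStar) -
      lam * φ (expPayoff p u σbar tauStar) - (1 - lam) * φ (expPayoff p u σlo tauStar)) /
    (φ (expPayoff p u σbar tauStar) - φ (expPayoff p u σlo tauStar))

/-- The set of `φs`-transformed sender values attainable by obedient ambiguous experiments;
the value of the sender's problem `(P)` equals `u` iff `φs u` is the least upper bound of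
this set (since `φs` is continuous and strictly increasing). -/
def senderValues {Ω A : Type*} [Fintype Ω] [Fintype A] [DecidableEq A]
    (φs φr : ℝ → ℝ) (p : Ω → ℝ) (us ur : A → Ω → ℝ) : Set ℝ :=
  {x | ∃ (n : ℕ) (σ : Fin n → Ω → A → ℝ) (μ : Fin n → ℝ),
    (∀ j, IsKernel (σ j)) ∧ IsProb μ ∧ AmbObedient φr p ur σ μ ∧
    x = ∑ j, μ j * φs (expPayoff p us (σ j) tauStar)}

/-- The set of feasible values of the auxiliary program `(Φ*(u))`: sums
`∑_θ λ_θ Φ_u(σ_θ)` over splittings `(λ_θ, σ_θ)` of obedient experiments, where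
`Φ_u(σ) = (φs(u_s(σ,τ*)) − φs(u)) / φr'(u_r(σ,τ*))`. -/
def phiProgram {Ω A : Type*} [Fintype Ω] [Fintype A] [DecidableEq A]
    (φs φr : ℝ → ℝ) (p : Ω → ℝ) (us ur : A → Ω → ℝ) (u : ℝ) : Set ℝ :=
  {x | ∃ (n : ℕ) (σ : Fin n → Ω → A → ℝ) (lam : Fin n → ℝ),
    (∀ j, IsKernel (σ j)) ∧ IsProb lam ∧
    Obedient p ur (fun ω a => ∑ j, lam j * σ j ω a) ∧
    x = ∑ j, lam j * ((φs (expPayoff p us (σ j) tauStar) - φs u) /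
      deriv φr (expPayoff p ur (σ j) tauStar))}


/-! ### Auxiliary lemmas -/

lemma SmoothIndex.tangent {φ : ℝ → ℝ} (h : SmoothIndex φ) (a b : ℝ) :
    φ b - φ a ≤ deriv φ a * (b - a) := by
  obtain ⟨hm, hc, hd⟩ := h
  rcases lt_trichotomy a b with hab | rfl | hba
  · have hs := hc.slope_le_deriv (Set.mem_univ a) (Set.mem_univ b) hab (hd a)
    rw [slope_def_field] at hs
    have hba' : (0:ℝ) < b - a := by linarith
    have := (div_le_iff₀ hba').mp hs
    linarith
  · simp
  · have hs := hc.deriv_le_slope (Set.mem_univ b) (Set.mem_univ a) hba (hd a)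
    rw [slope_def_field] at hs
    have hab' : (0:ℝ) < a - b := by linarith
    have h2 : deriv φ a * (a - b) ≤ φ a - φ b := by
      rw [← le_div_iff₀ hab']; exact hs
    linarith

lemma SmoothIndex.deriv_pos {φ : ℝ → ℝ} (h : SmoothIndex φ) (x : ℝ) : 0 < deriv φ x := by
  obtain ⟨hm, hc, hd⟩ := h
  have hs := hc.slope_le_deriv (Set.mem_univ x) (Set.mem_univ (x + 1)) (by linarith) (hd x)
  rw [slope_def_field] at hs
  have hpos : 0 < φ (x + 1) - φ x := sub_pos.2 (hm (by linarith))
  have he : x + 1 - x = (1:ℝ) := by ring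
  rw [he, div_one] at hs
  linarith

lemma SmoothIndex.deriv_anti {φ : ℝ → ℝ} (h : SmoothIndex φ) {a b : ℝ} (hab : a ≤ b) :
    deriv φ b ≤ deriv φ a :=
  h.2.1.antitoneOn_deriv (fun x _ => h.2.2 x) (Set.mem_univ a) (Set.mem_univ b) hab

lemma tauStar_isKernel {A : Type*} [Fintype A] [DecidableEq A] :
    IsKernel (tauStar (A := A)) := by
  constructor
  · intro m a
    unfold tauStar
    split <;> norm_num
  · intro m
    simp [tauStar]

lemma mixExp_isKernel {X Y : Type*} [Fintype Y] {k1 k2 : X → Y → ℝ}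
    (h1 : IsKernel k1) (h2 : IsKernel k2) {t : ℝ} (h0 : 0 ≤ t) (ht : t ≤ 1) :
    IsKernel (mixExp t k1 k2) := by
  constructor
  · intro x y
    have := h1.1 x y
    have := h2.1 x y
    unfold mixExp
    nlinarith
  · intro x
    unfold mixExp
    rw [Finset.sum_add_distrib, ← Finset.mul_sum, ← Finset.mul_sum, h1.2, h2.2]
    ring

lemma expPayoff_mix_left {Ω A : Type*} [Fintype Ω] [Fintype A]
    (p : Ω → ℝ) (u : A → Ω → ℝ) (t : ℝ) (σ1 σ2 : Ω → A → ℝ) (τ : A → A → ℝ) :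
    expPayoff p u (mixExp t σ1 σ2) τ
      = t * expPayoff p u σ1 τ + (1 - t) * expPayoff p u σ2 τ := by
  unfold expPayoff mixExp
  simp only [Finset.mul_sum, ← Finset.sum_add_distrib]
  refine Finset.sum_congr rfl fun ω _ => Finset.sum_congr rfl fun m _ =>
    Finset.sum_congr rfl fun a _ => ?_
  ring

lemma expPayoff_mix_right {Ω A : Type*} [Fintype Ω] [Fintype A]
    (p : Ω → ℝ) (u : A → Ω → ℝ) (t : ℝ) (σ : Ω → A → ℝ) (τ1 τ2 : A → A → ℝ) :
    expPayoff p u σ (mixExp t τ1 τ2)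
      = t * expPayoff p u σ τ1 + (1 - t) * expPayoff p u σ τ2 := by
  unfold expPayoff mixExp
  simp only [Finset.mul_sum, ← Finset.sum_add_distrib]
  refine Finset.sum_congr rfl fun ω _ => Finset.sum_congr rfl fun m _ =>
    Finset.sum_congr rfl fun a _ => ?_
  ring

/-- Two-point comparison used for part (iii): if the `φr`-obedience inequality holds,
the low payoffs are ordered, and the status-quo payoffs are ranked, then the inequality
survives a further concave transformation. -/
lemma two_point_iii {φ : ℝ → ℝ} (hφ : SmoothIndex φ) {m1 m2 a b c d : ℝ}
    (hm1 : 0 ≤ m1) (hm2 : 0 ≤ m2) (had : d ≤ a) (hcd : c ≤ d)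
    (hlin : m1 * b + m2 * c ≤ m1 * a + m2 * d) :
    m1 * φ b + m2 * φ c ≤ m1 * φ a + m2 * φ d := by
  have pa := hφ.deriv_pos a
  have pd := hφ.deriv_pos d
  have hanti : deriv φ a ≤ deriv φ d := hφ.deriv_anti had
  have t1 := hφ.tangent a b
  have t2 := hφ.tangent d c
  rcases le_or_gt b a with hba | hab
  · have h1 : φ b ≤ φ a := hφ.1.monotone hba
    have h2 : φ c ≤ φ d := hφ.1.monotone hcd
    nlinarith
  · have hdc : 0 ≤ m2 * (d - c) := by nlinarith
    have h1 : m1 * (φ b - φ a) ≤ m1 * (deriv φ a * (b - a)) :=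
      mul_le_mul_of_nonneg_left t1 hm1
    have h2 : m1 * (deriv φ a * (b - a)) ≤ deriv φ a * (m2 * (d - c)) := by
      have hl : m1 * (b - a) ≤ m2 * (d - c) := by linarith
      nlinarith
    have h3 : deriv φ a * (m2 * (d - c)) ≤ deriv φ d * (m2 * (d - c)) :=
      mul_le_mul_of_nonneg_right hanti hdc
    have h4 : m2 * (φ c - φ d) ≤ m2 * (deriv φ d * (c - d)) :=
      mul_le_mul_of_nonneg_left t2 hm2
    nlinarith

/-- Two-point comparison used for part (ii): tilting the weights by the inverse of the
derivative of the extra concave transformation preserves obedience. -/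
lemma two_point_ii {φ : ℝ → ℝ} (hφ : SmoothIndex φ) {m1 m2 a b c d : ℝ}
    (hm1 : 0 ≤ m1) (hm2 : 0 ≤ m2)
    (hlin : m1 * b + m2 * c ≤ m1 * a + m2 * d) :
    m1 / deriv φ a * φ b + m2 / deriv φ d * φ c
      ≤ m1 / deriv φ a * φ a + m2 / deriv φ d * φ d := by
  have pa := hφ.deriv_pos a
  have pd := hφ.deriv_pos d
  have t1 := hφ.tangent a b
  have t2 := hφ.tangent d c
  have h1 : m1 / deriv φ a * (φ b - φ a) ≤ m1 * (b - a) := by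
    rw [div_mul_eq_mul_div, div_le_iff₀ pa]
    nlinarith
  have h2 : m2 / deriv φ d * (φ c - φ d) ≤ m2 * (c - d) := by
    rw [div_mul_eq_mul_div, div_le_iff₀ pd]
    nlinarith
  have e1 : m1 / deriv φ a * (φ b - φ a) = m1 / deriv φ a * φ b - m1 / deriv φ a * φ a := by ring
  have e2 : m2 / deriv φ d * (φ c - φ d) = m2 / deriv φ d * φ c - m2 / deriv φ d * φ d := by ring
  rw [e1] at h1
  rw [e2] at h2
  linarith

/-- Theorem 5, robustness: suppose the binary ambiguous experiment
`((σbar, σlo), μ)` (indexed by `Bool`, with `μ true` the weight on `σbar`) is obedient,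
`μ` non-degenerate, and it benefits the sender (`U_s > u_s^BP`, stated via the strictly
increasing index).  Then (i) it also benefits every less ambiguity-averse sender `φs'`
(i.e. `φs = φ ∘ φs'`); (ii) for every more ambiguity-averse receiver `φ ∘ φr` there is a
weight `μ'` making `((σbar, σlo), μ')` obedient and beneficial to the sender; and (iii) if
`σlo` is obedient as a single experiment, `μ' = μ` works. -/
theorem robustness_to_ambiguity_aversion
    {Ω A : Type*} [Fintype Ω] [Fintype A] [DecidableEq A]
    (p : Ω → ℝ) (hp : IsProb p) (us ur : A → Ω → ℝ)
    (φs φr : ℝ → ℝ) (hφs : SmoothIndex φs) (hφr : SmoothIndex φr)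
    (usBP : ℝ)
    (husBP : IsGreatest {x : ℝ | ∃ σ0 : Ω → A → ℝ,
      IsKernel σ0 ∧ Obedient p ur σ0 ∧ x = expPayoff p us σ0 tauStar} usBP)
    (σbar σlo : Ω → A → ℝ) (hσbar : IsKernel σbar) (hσlo : IsKernel σlo)
    (μ : Bool → ℝ) (hμ : IsProb μ) (hnd : ∀ b, 0 < μ b)
    (hobed : AmbObedient φr p ur (fun b : Bool => if b then σbar else σlo) μ)
    (hben : φs usBP < μ true * φs (expPayoff p us σbar tauStar) +
      μ false * φs (expPayoff p us σlo tauStar)) :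
    (∀ φ φs' : ℝ → ℝ, SmoothIndex φ → SmoothIndex φs' → (∀ x, φs x = φ (φs' x)) →
      φs' usBP < μ true * φs' (expPayoff p us σbar tauStar) +
        μ false * φs' (expPayoff p us σlo tauStar)) ∧
    (∀ φ : ℝ → ℝ, SmoothIndex φ →
      ∃ μ' : Bool → ℝ, IsProb μ' ∧
        AmbObedient (φ ∘ φr) p ur (fun b : Bool => if b then σbar else σlo) μ' ∧
        φs usBP < μ' true * φs (expPayoff p us σbar tauStar) +
          μ' false * φs (expPayoff p us σlo tauStar)) ∧
    (∀ φ : ℝ → ℝ, SmoothIndex φ → Obedient p ur σlo →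
      AmbObedient (φ ∘ φr) p ur (fun b : Bool => if b then σbar else σlo) μ ∧
      φs usBP < μ true * φs (expPayoff p us σbar tauStar) +
        μ false * φs (expPayoff p us σlo tauStar)) := by
  set ubar := expPayoff p us σbar tauStar with hubar
  set ulo := expPayoff p us σlo tauStar with hulo
  set xs := expPayoff p ur σbar tauStar with hxs
  set ys := expPayoff p ur σlo tauStar with hys
  have hμt := hnd true
  have hμf := hnd false
  have hμsum : μ true + μ false = 1 := by
    have h := hμ.2
    simpa [Fintype.sum_bool] using h
  have hobed' : ∀ τ : A → A → ℝ, IsKernel τ →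
      μ true * φr (expPayoff p ur σbar τ) + μ false * φr (expPayoff p ur σlo τ)
        ≤ μ true * φr xs + μ false * φr ys := by
    intro τ hτ
    have h := hobed τ hτ
    simpa [Fintype.sum_bool] using h
  -- first-order obedience
  have key1 : ∀ τ : A → A → ℝ, IsKernel τ →
      μ true * (deriv φr xs * (expPayoff p ur σbar τ - xs))
        + μ false * (deriv φr ys * (expPayoff p ur σlo τ - ys)) ≤ 0 := by
    intro τ hτ
    set X := expPayoff p ur σbar τ with hX
    set Y := expPayoff p ur σlo τ with hY
    set δ := X - xs with hδ
    set γ := Y - ys with hγ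
    have hbound : ∀ l ∈ Set.Ioc (0:ℝ) 1,
        μ true * φr (xs + l * δ) + μ false * φr (ys + l * γ)
          ≤ μ true * φr xs + μ false * φr ys := by
      intro l hl
      have hk := mixExp_isKernel hτ tauStar_isKernel hl.1.le hl.2
      have h2 := hobed' (mixExp l τ tauStar) hk
      rw [expPayoff_mix_right, expPayoff_mix_right] at h2
      have e1 : l * X + (1 - l) * xs = xs + l * δ := by rw [hδ]; ring
      have e2 : l * Y + (1 - l) * ys = ys + l * γ := by rw [hγ]; ring
      rw [e1, e2] at h2
      exact h2
    have d1 : HasDerivAt (fun l : ℝ => xs + l * δ) δ 0 := by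
      simpa using ((hasDerivAt_id (0:ℝ)).mul_const δ).const_add xs
    have d1' : HasDerivAt (fun l : ℝ => ys + l * γ) γ 0 := by
      simpa using ((hasDerivAt_id (0:ℝ)).mul_const γ).const_add ys
    have e0 : xs + (0:ℝ) * δ = xs := by ring
    have e0' : ys + (0:ℝ) * γ = ys := by ring
    have d2 : HasDerivAt (fun l : ℝ => φr (xs + l * δ)) (deriv φr xs * δ) 0 := by
      have hout : HasDerivAt φr (deriv φr xs) (xs + (0:ℝ) * δ) := by
        rw [e0]; exact (hφr.2.2 xs).hasDerivAt
      exact HasDerivAt.comp (0:ℝ) hout d1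
    have d3 : HasDerivAt (fun l : ℝ => φr (ys + l * γ)) (deriv φr ys * γ) 0 := by
      have hout : HasDerivAt φr (deriv φr ys) (ys + (0:ℝ) * γ) := by
        rw [e0']; exact (hφr.2.2 ys).hasDerivAt
      exact HasDerivAt.comp (0:ℝ) hout d1'
    have hd : HasDerivAt
        (fun l : ℝ => μ true * φr (xs + l * δ) + μ false * φr (ys + l * γ))
        (μ true * (deriv φr xs * δ) + μ false * (deriv φr ys * γ)) 0 :=
      (HasDerivAt.const_mul (μ true) d2).add (HasDerivAt.const_mul (μ false) d3)
    have hslope := hasDerivAt_iff_tendsto_slope.mp hd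
    have hmono : nhdsWithin (0:ℝ) (Set.Ioi 0) ≤ nhdsWithin (0:ℝ) {(0:ℝ)}ᶜ :=
      nhdsWithin_mono 0 (fun x hx => Set.mem_compl_singleton_iff.mpr (ne_of_gt hx))
    refine le_of_tendsto (hslope.mono_left hmono) ?_
    filter_upwards [Ioc_mem_nhdsGT_of_mem (Set.mem_Ico.mpr ⟨le_refl (0:ℝ), zero_lt_one⟩)]
      with l hl
    have hb := hbound l hl
    have hsl : slope (fun l : ℝ => μ true * φr (xs + l * δ) + μ false * φr (ys + l * γ)) 0 l
        = ((μ true * φr (xs + l * δ) + μ false * φr (ys + l * γ))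
            - (μ true * φr xs + μ false * φr ys)) / l := by
      rw [slope_def_field]
      norm_num
    rw [hsl]
    exact div_nonpos_iff.mpr (Or.inr ⟨by linarith, hl.1.le⟩)
  have dxs := hφr.deriv_pos xs
  have dys := hφr.deriv_pos ys
  set Z := μ true * deriv φr xs + μ false * deriv φr ys with hZdef
  have hZ : 0 < Z := by
    have := mul_pos hμt dxs
    have := mul_pos hμf dys
    rw [hZdef]; linarith
  set ρ := μ true * deriv φr xs / Z with hρdef
  have hρ0 : 0 < ρ := div_pos (mul_pos hμt dxs) hZ
  have hρ1 : ρ < 1 := by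
    rw [hρdef, div_lt_one hZ, hZdef]
    linarith [mul_pos hμf dys]
  have h1ρ : 1 - ρ = μ false * deriv φr ys / Z := by
    have hZ' : Z ≠ 0 := ne_of_gt hZ
    rw [hρdef]
    field_simp
    rw [hZdef]
    ring
  -- the (ρ, 1-ρ) mixture is an obedient single experiment
  have hmixobed : Obedient p ur (mixExp ρ σbar σlo) := by
    intro τ hτ
    rw [expPayoff_mix_left, expPayoff_mix_left]
    have hk := key1 τ hτ
    have hquot : (μ true * (deriv φr xs * (expPayoff p ur σbar τ - xs))
        + μ false * (deriv φr ys * (expPayoff p ur σlo τ - ys))) / Z ≤ 0 :=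
      div_nonpos_iff.mpr (Or.inr ⟨hk, hZ.le⟩)
    have e : ρ * (expPayoff p ur σbar τ - xs) + (1 - ρ) * (expPayoff p ur σlo τ - ys)
        = (μ true * (deriv φr xs * (expPayoff p ur σbar τ - xs))
            + μ false * (deriv φr ys * (expPayoff p ur σlo τ - ys))) / Z := by
      rw [h1ρ, hρdef]
      field_simp
    nlinarith [e ▸ hquot]
  have hmixle : ρ * ubar + (1 - ρ) * ulo ≤ usBP := by
    refine husBP.2 ⟨mixExp ρ σbar σlo,
      mixExp_isKernel hσbar hσlo hρ0.le hρ1.le, hmixobed, ?_⟩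
    rw [expPayoff_mix_left, ← hubar, ← hulo]
  have hkeyρ : ρ * φs ubar + (1 - ρ) * φs ulo ≤ φs usBP := by
    have hconc := hφs.2.1.2 (Set.mem_univ ubar) (Set.mem_univ ulo) hρ0.le
      (by linarith : (0:ℝ) ≤ 1 - ρ) (by ring : ρ + (1 - ρ) = 1)
    rw [smul_eq_mul, smul_eq_mul, smul_eq_mul, smul_eq_mul] at hconc
    exact le_trans hconc (hφs.1.monotone hmixle)
  have hsplit : 0 < (μ true - ρ) * (φs ubar - φs ulo) := by
    have h := lt_of_le_of_lt hkeyρ hben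
    have e : (μ true - ρ) * (φs ubar - φs ulo)
        = (μ true * φs ubar + μ false * φs ulo) - (ρ * φs ubar + (1 - ρ) * φs ulo)
          - (μ true + μ false - 1) * φs ulo := by ring
    have h2 : (μ true + μ false - 1) * φs ulo = 0 := by rw [hμsum]; ring
    rw [e]
    linarith
  have hub_of : ulo ≤ usBP → usBP < ubar := by
    intro h
    by_contra hc
    push_neg at hc
    have h1 : φs ubar ≤ φs usBP := hφs.1.monotone hc
    have h2 : φs ulo ≤ φs usBP := hφs.1.monotone h
    have h3 : μ true * φs usBP + μ false * φs usBP = φs usBP := by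
      rw [← add_mul, hμsum, one_mul]
    linarith [mul_le_mul_of_nonneg_left h1 hμt.le, mul_le_mul_of_nonneg_left h2 hμf.le, hben]
  have hlo_of : ubar ≤ usBP → usBP < ulo := by
    intro h
    by_contra hc
    push_neg at hc
    have h1 : φs ubar ≤ φs usBP := hφs.1.monotone h
    have h2 : φs ulo ≤ φs usBP := hφs.1.monotone hc
    have h3 : μ true * φs usBP + μ false * φs usBP = φs usBP := by
      rw [← add_mul, hμsum, one_mul]
    linarith [mul_le_mul_of_nonneg_left h1 hμt.le, mul_le_mul_of_nonneg_left h2 hμf.le, hben]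
  have hcaseB : ulo ≤ usBP → ys < xs := by
    intro h
    have hub := hub_of h
    have hAB : 0 < φs ubar - φs ulo := by
      have := hφs.1 (lt_of_le_of_lt h hub)
      linarith
    have hρμ : ρ < μ true := by
      by_contra hc
      push_neg at hc
      have : (μ true - ρ) * (φs ubar - φs ulo) ≤ 0 :=
        mul_nonpos_iff.mpr (Or.inr ⟨by linarith, by linarith⟩)
      linarith
    have h1 : μ true * deriv φr xs < μ true * Z := by
      rw [hρdef] at hρμ
      exact (div_lt_iff₀ hZ).mp hρμ
    have h2 : deriv φr xs < Z := lt_of_mul_lt_mul_left h1 hμt.le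
    rw [hZdef] at h2
    have hdlt : deriv φr xs < deriv φr ys := by
      by_contra hc
      push_neg at hc
      have e : μ true * deriv φr xs + μ false * deriv φr xs = deriv φr xs := by
        rw [← add_mul, hμsum, one_mul]
      linarith [mul_le_mul_of_nonneg_left hc hμf.le]
    by_contra hc
    push_neg at hc
    exact absurd (hφr.deriv_anti hc) (not_le.mpr hdlt)
  have hcaseC : ubar ≤ usBP → xs < ys := by
    intro h
    have hub := hlo_of h
    have hAB : φs ubar - φs ulo < 0 := by
      have := hφs.1 (lt_of_le_of_lt h hub)
      linarith
    have hρμ : μ true < ρ := by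
      by_contra hc
      push_neg at hc
      have : (μ true - ρ) * (φs ubar - φs ulo) ≤ 0 :=
        mul_nonpos_iff.mpr (Or.inl ⟨by linarith, by linarith⟩)
      linarith
    have h1 : μ true * Z < μ true * deriv φr xs := by
      rw [hρdef] at hρμ
      exact (lt_div_iff₀ hZ).mp hρμ
    have h2 : Z < deriv φr xs := lt_of_mul_lt_mul_left h1 hμt.le
    rw [hZdef] at h2
    have hdlt : deriv φr ys < deriv φr xs := by
      by_contra hc
      push_neg at hc
      have e : μ true * deriv φr xs + μ false * deriv φr xs = deriv φr xs := by
        rw [← add_mul, hμsum, one_mul]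
      linarith [mul_le_mul_of_nonneg_left hc hμf.le]
    by_contra hc
    push_neg at hc
    exact absurd (hφr.deriv_anti hc) (not_le.mpr hdlt)
  refine ⟨?_, ?_, ?_⟩
  · -- part (i)
    intro φ φs' hφ hφs' heq
    have hconc := hφ.2.1.2 (Set.mem_univ (φs' ubar)) (Set.mem_univ (φs' ulo))
      hμt.le hμf.le hμsum
    rw [smul_eq_mul, smul_eq_mul, smul_eq_mul, smul_eq_mul] at hconc
    have hlt : φ (φs' usBP) < φ (μ true * φs' ubar + μ false * φs' ulo) := by
      calc φ (φs' usBP) = φs usBP := (heq usBP).symm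
        _ < μ true * φs ubar + μ false * φs ulo := hben
        _ = μ true * φ (φs' ubar) + μ false * φ (φs' ulo) := by rw [heq ubar, heq ulo]
        _ ≤ _ := hconc
    exact hφ.1.lt_iff_lt.mp hlt
  · -- part (ii)
    intro φ hφ
    have pa := hφ.deriv_pos (φr xs)
    have pd := hφ.deriv_pos (φr ys)
    have hw1p : 0 < μ true / deriv φ (φr xs) := div_pos hμt pa
    have hw2p : 0 < μ false / deriv φ (φr ys) := div_pos hμf pd
    set w1 := μ true / deriv φ (φr xs) with hw1
    set w2 := μ false / deriv φ (φr ys) with hw2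
    have hW : 0 < w1 + w2 := by linarith
    refine ⟨fun b => if b then w1 / (w1 + w2) else w2 / (w1 + w2), ⟨?_, ?_⟩, ?_, ?_⟩
    · intro b
      cases b
      · exact le_of_lt (div_pos hw2p hW)
      · exact le_of_lt (div_pos hw1p hW)
    · rw [Fintype.sum_bool]
      show w1 / (w1 + w2) + w2 / (w1 + w2) = 1
      rw [← add_div, div_self (ne_of_gt hW)]
    · -- obedience for the tilted weights
      intro τ hτ
      have h2 := two_point_ii hφ hμt.le hμf.le (hobed' τ hτ)
      rw [← hw1, ← hw2] at h2
      have egl : ∀ t s : ℝ, w1 / (w1 + w2) * t + w2 / (w1 + w2) * s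
          = (w1 + w2)⁻¹ * (w1 * t + w2 * s) := by
        intro t s
        field_simp
      have hfin := mul_le_mul_of_nonneg_left h2 (inv_nonneg.mpr hW.le)
      rw [Fintype.sum_bool, Fintype.sum_bool]
      show w1 / (w1 + w2) * (φ ∘ φr) (expPayoff p ur σbar τ)
            + w2 / (w1 + w2) * (φ ∘ φr) (expPayoff p ur σlo τ)
          ≤ w1 / (w1 + w2) * (φ ∘ φr) xs + w2 / (w1 + w2) * (φ ∘ φr) ys
      simp only [Function.comp_apply]
      rw [egl, egl]
      exact hfin
    · -- the tilted weights still benefit the sender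
      show φs usBP < w1 / (w1 + w2) * φs ubar + w2 / (w1 + w2) * φs ulo
      have hsum' : w1 / (w1 + w2) + w2 / (w1 + w2) = 1 := by
        rw [← add_div, div_self (ne_of_gt hW)]
      have hμf' : μ false = 1 - μ true := by linarith
      rcases le_or_gt ulo usBP with h | h
      · -- weight shifts towards σbar, which the sender strictly prefers
        have hub := hub_of h
        have hyx : ys < xs := hcaseB h
        have hDle : deriv φ (φr xs) ≤ deriv φ (φr ys) :=
          hφ.deriv_anti (hφr.1.monotone hyx.le)
        have hinv : 1 / deriv φ (φr ys) ≤ 1 / deriv φ (φr xs) :=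
          one_div_le_one_div_of_le pa hDle
        have hμ'ge : μ true ≤ w1 / (w1 + w2) := by
          rw [le_div_iff₀ hW]
          have hprod : μ true * μ false * (1 / deriv φ (φr ys))
              ≤ μ true * μ false * (1 / deriv φ (φr xs)) :=
            mul_le_mul_of_nonneg_left hinv (by positivity)
          have hexp : μ true * (w1 + w2)
              = μ true * μ true * (1 / deriv φ (φr xs))
                + μ true * μ false * (1 / deriv φ (φr ys)) := by
            rw [hw1, hw2]; ring
          have hexp2 : w1 = μ true * μ true * (1 / deriv φ (φr xs))
              + μ false * μ true * (1 / deriv φ (φr xs)) := by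
            rw [hw1]
            have e : μ true / deriv φ (φr xs)
                = (μ true + μ false) * μ true * (1 / deriv φ (φr xs)) := by
              rw [hμsum]; ring
            rw [e]; ring
          rw [hexp, hexp2]
          linarith [hprod]
        have hABpos : φs ulo < φs ubar := hφs.1 (lt_of_le_of_lt h hub)
        have hkey : 0 ≤ (w1 / (w1 + w2) - μ true) * (φs ubar - φs ulo) :=
          mul_nonneg (by linarith) (by linarith)
        have hben' := hben
        rw [hμf'] at hben'
        have hq2 : w2 / (w1 + w2) = 1 - w1 / (w1 + w2) := by linarith [hsum']
        rw [hq2]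
        linarith [hben', hkey]
      · rcases le_or_gt ubar usBP with h' | h'
        · -- weight shifts towards σlo, which the sender strictly prefers
          have hxy : xs < ys := hcaseC h'
          have hDle : deriv φ (φr ys) ≤ deriv φ (φr xs) :=
            hφ.deriv_anti (hφr.1.monotone hxy.le)
          have hinv : 1 / deriv φ (φr xs) ≤ 1 / deriv φ (φr ys) :=
            one_div_le_one_div_of_le pd hDle
          have hμ'ge : μ false ≤ w2 / (w1 + w2) := by
            rw [le_div_iff₀ hW]
            have hprod : μ true * μ false * (1 / deriv φ (φr xs))
                ≤ μ true * μ false * (1 / deriv φ (φr ys)) :=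
              mul_le_mul_of_nonneg_left hinv (by positivity)
            have hexp : μ false * (w1 + w2)
                = μ true * μ false * (1 / deriv φ (φr xs))
                  + μ false * μ false * (1 / deriv φ (φr ys)) := by
              rw [hw1, hw2]; ring
            have hexp2 : w2 = μ false * μ false * (1 / deriv φ (φr ys))
                + μ true * μ false * (1 / deriv φ (φr ys)) := by
              rw [hw2]
              have e : μ false / deriv φ (φr ys)
                  = (μ true + μ false) * μ false * (1 / deriv φ (φr ys)) := by
                rw [hμsum]; ring
              rw [e]; ring
            rw [hexp, hexp2]
            linarith [hprod]
          have hABpos : φs ubar < φs ulo := hφs.1 (lt_of_le_of_lt h' h)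
          have hkey : 0 ≤ (w2 / (w1 + w2) - μ false) * (φs ulo - φs ubar) :=
            mul_nonneg (by linarith) (by linarith)
          have hμt' : μ true = 1 - μ false := by linarith
          have hben' := hben
          rw [hμt'] at hben'
          have hq1 : w1 / (w1 + w2) = 1 - w2 / (w1 + w2) := by linarith [hsum']
          rw [hq1]
          linarith [hben', hkey]
        · -- both experiments strictly benefit the sender
          have h1 : φs usBP < φs ubar := hφs.1 h'
          have h2 : φs usBP < φs ulo := hφs.1 h
          have p1 : 0 < w1 / (w1 + w2) := div_pos hw1p hW
          have p2 : 0 < w2 / (w1 + w2) := div_pos hw2p hW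
          have e : w1 / (w1 + w2) * φs usBP + w2 / (w1 + w2) * φs usBP = φs usBP := by
            rw [← add_mul, hsum', one_mul]
          linarith [mul_lt_mul_of_pos_left h1 p1, mul_lt_mul_of_pos_left h2 p2, e]
  · -- part (iii)
    intro φ hφ hσloObed
    have hulole : ulo ≤ usBP := husBP.2 ⟨σlo, hσlo, hσloObed, hulo⟩
    have hyx : ys < xs := hcaseB hulole
    refine ⟨?_, hben⟩
    intro τ hτ
    rw [Fintype.sum_bool, Fintype.sum_bool]
    show μ true * (φ ∘ φr) (expPayoff p ur σbar τ) + μ false * (φ ∘ φr) (expPayoff p ur σlo τ)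
        ≤ μ true * (φ ∘ φr) xs + μ false * (φ ∘ φr) ys
    simp only [Function.comp_apply]
    exact two_point_iii hφ hμt.le hμf.le (hφr.1.monotone hyx.le)
      (hφr.1.monotone (hσloObed τ hτ)) (hobed' τ hτ)
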